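/- Let k ≥ 1 and let H be a graph. Then H is an induced subgraph of both S_k and T_k if and only if H is an induced subgraph of the disjoint union 3P_k of three paths on k vertices, or an induced subgraph of the disjoint union P_{2k+1} + P_{k-1}. -/

import Mathlib

open SimpleGraph

set_option maxRecDepth 10000

/-- The `k`-subdivided claw `S_k`: a center vertex (`none`) with three pendant
paths of length `k` attached. Vertex `some (i, j)` is the `(j+1)`-st vertex on arm `i`. -/
def subClaw (k : ℕ) : SimpleGraph (Option (Fin 3 × Fin k)) :=
  SimpleGraph.fromRel fun a b =>
    match a, b with
    | none, some p => (p.2 : ℕ) = 0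
    | some p, some q => p.1 = q.1 ∧ (q.2 : ℕ) = (p.2 : ℕ) + 1
    | _, _ => False

/-- The `k`-subdivided net `T_k`: a triangle on the vertices `(i, 0)` with a pendant
path of length `k` attached to each triangle vertex. -/
def subNet (k : ℕ) : SimpleGraph (Fin 3 × Fin (k + 1)) :=
  SimpleGraph.fromRel fun a b =>
    ((a.2 : ℕ) = 0 ∧ (b.2 : ℕ) = 0 ∧ a.1 ≠ b.1) ∨ (a.1 = b.1 ∧ (b.2 : ℕ) = (a.2 : ℕ) + 1)

/-- `3P_k`: the disjoint union of three paths on `k` vertices. -/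
def threePath (k : ℕ) : SimpleGraph (Fin 3 × Fin k) :=
  SimpleGraph.fromRel fun a b => a.1 = b.1 ∧ (b.2 : ℕ) = (a.2 : ℕ) + 1

/-- Disjoint union of two simple graphs. -/
def disjSum {α β : Type*} (G : SimpleGraph α) (H : SimpleGraph β) : SimpleGraph (α ⊕ β) :=
  SimpleGraph.fromRel fun a b =>
    match a, b with
    | Sum.inl x, Sum.inl y => G.Adj x y
    | Sum.inr x, Sum.inr y => H.Adj x y
    | _, _ => False

/-- `H` is (isomorphic to) an induced subgraph of `G`. -/
def IsInducedSubgraph {α β : Type*} (H : SimpleGraph α) (G : SimpleGraph β) : Prop :=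
  Nonempty (H ↪g G)

/-- `G` is `{S_k, T_k}`-free. -/
def SkTkFree {V : Type*} (k : ℕ) (G : SimpleGraph V) : Prop :=
  ¬ IsInducedSubgraph (subClaw k) G ∧ ¬ IsInducedSubgraph (subNet k) G

/-- `G` has a path of eccentricity at most `k`. -/
def HasPathEccLE {V : Type*} (G : SimpleGraph V) (k : ℕ) : Prop :=
  ∃ (u v : V) (p : G.Walk u v), p.IsPath ∧ ∀ x : V, ∃ y ∈ p.support, G.dist x y ≤ k

lemma subClaw_adj_ss {k : ℕ} (p q : Fin 3 × Fin k) :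
    (subClaw k).Adj (some p) (some q) ↔
      (p.1 : ℕ) = q.1 ∧ ((q.2 : ℕ) = p.2 + 1 ∨ (p.2 : ℕ) = q.2 + 1) := by
  obtain ⟨i, j⟩ := p; obtain ⟨i', j'⟩ := q
  simp [subClaw, fromRel_adj, Prod.ext_iff, Fin.ext_iff]
  omega

lemma subClaw_adj_ns {k : ℕ} (p : Fin 3 × Fin k) :
    (subClaw k).Adj none (some p) ↔ (p.2 : ℕ) = 0 := by
  simp [subClaw, fromRel_adj]

lemma subClaw_adj_sn {k : ℕ} (p : Fin 3 × Fin k) :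
    (subClaw k).Adj (some p) none ↔ (p.2 : ℕ) = 0 := by
  simp [subClaw, fromRel_adj]

lemma subNet_adj {k : ℕ} (a b : Fin 3 × Fin (k+1)) :
    (subNet k).Adj a b ↔
      ((a.2 : ℕ) = 0 ∧ (b.2 : ℕ) = 0 ∧ (a.1 : ℕ) ≠ b.1) ∨
        ((a.1 : ℕ) = b.1 ∧ ((b.2 : ℕ) = a.2 + 1 ∨ (a.2 : ℕ) = b.2 + 1)) := by
  obtain ⟨i, j⟩ := a; obtain ⟨i', j'⟩ := b
  simp [subNet, fromRel_adj, Prod.ext_iff, -Fin.val_eq_zero_iff, Fin.ext_iff]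
  omega

lemma threePath_adj {k : ℕ} (p q : Fin 3 × Fin k) :
    (threePath k).Adj p q ↔
      (p.1 : ℕ) = q.1 ∧ ((q.2 : ℕ) = p.2 + 1 ∨ (p.2 : ℕ) = q.2 + 1) := by
  obtain ⟨i, j⟩ := p; obtain ⟨i', j'⟩ := q
  simp [threePath, fromRel_adj, Prod.ext_iff, Fin.ext_iff]
  omega

lemma disjSum_adj_ll {α β : Type*} {G : SimpleGraph α} {H : SimpleGraph β} (x y : α) :
    (disjSum G H).Adj (Sum.inl x) (Sum.inl y) ↔ G.Adj x y := by
  simp [disjSum, fromRel_adj]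
  constructor
  · rintro ⟨h1, h2 | h2⟩; exact h2; exact h2.symm
  · exact fun h => ⟨fun e => G.irrefl (e ▸ h), Or.inl h⟩

lemma disjSum_adj_rr {α β : Type*} {G : SimpleGraph α} {H : SimpleGraph β} (x y : β) :
    (disjSum G H).Adj (Sum.inr x) (Sum.inr y) ↔ H.Adj x y := by
  simp [disjSum, fromRel_adj]
  constructor
  · rintro ⟨h1, h2 | h2⟩; exact h2; exact h2.symm
  · exact fun h => ⟨fun e => H.irrefl (e ▸ h), Or.inl h⟩

lemma disjSum_adj_lr {α β : Type*} {G : SimpleGraph α} {H : SimpleGraph β} (x : α) (y : β) :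
    ¬ (disjSum G H).Adj (Sum.inl x) (Sum.inr y) := by
  simp [disjSum, fromRel_adj]

lemma disjSum_adj_rl {α β : Type*} {G : SimpleGraph α} {H : SimpleGraph β} (x : β) (y : α) :
    ¬ (disjSum G H).Adj (Sum.inr x) (Sum.inl y) := by
  simp [disjSum, fromRel_adj]

/-- map from sub-claw vertices (avoiding `some (2,0)`) to `P_{2k+1} + P_{k-1}`. -/
def chi (k : ℕ) : Option (Fin 3 × Fin k) → Fin (2*k+1) ⊕ Fin (k-1)
  | none => Sum.inl ⟨k, by omega⟩
  | some (i, j) =>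
    if (i : ℕ) = 0 then Sum.inl ⟨k - 1 - j, by omega⟩
    else if (i : ℕ) = 1 then Sum.inl ⟨k + 1 + j, by have := j.isLt; omega⟩
    else if h : (j : ℕ) = 0 then Sum.inl ⟨0, by omega⟩
    else Sum.inr ⟨(j : ℕ) - 1, by have := j.isLt; omega⟩

lemma chi_inj {k : ℕ} (hk : 1 ≤ k) (a b : Option (Fin 3 × Fin k))
    (ha : a ≠ some (2, ⟨0, hk⟩)) (hb : b ≠ some (2, ⟨0, hk⟩))
    (h : chi k a = chi k b) : a = b := by
  rcases a with _ | ⟨i, j⟩ <;> rcases b with _ | ⟨i', j'⟩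
  · rfl
  · have hj' := j'.isLt
    have hb' : ¬ ((i' : ℕ) = 2 ∧ (j' : ℕ) = 0) := by
      simpa [Option.some.injEq, Prod.ext_iff, Fin.ext_iff] using hb
    simp only [chi] at h
    split_ifs at h <;>
      simp only [Sum.inl.injEq, Fin.mk.injEq, reduceCtorEq] at h <;> exfalso <;> omega
  · have hj := j.isLt
    have ha' : ¬ ((i : ℕ) = 2 ∧ (j : ℕ) = 0) := by
      simpa [Option.some.injEq, Prod.ext_iff, Fin.ext_iff] using ha
    simp only [chi] at h
    split_ifs at h <;>
      simp only [Sum.inl.injEq, Fin.mk.injEq, reduceCtorEq] at h <;> exfalso <;> omega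
  · have hj := j.isLt; have hj' := j'.isLt
    have hi := i.isLt; have hi' := i'.isLt
    have ha' : ¬ ((i : ℕ) = 2 ∧ (j : ℕ) = 0) := by
      simpa [Option.some.injEq, Prod.ext_iff, Fin.ext_iff] using ha
    have hb' : ¬ ((i' : ℕ) = 2 ∧ (j' : ℕ) = 0) := by
      simpa [Option.some.injEq, Prod.ext_iff, Fin.ext_iff] using hb
    simp only [Option.some.injEq, Prod.ext_iff, Fin.ext_iff]
    simp only [chi] at h
    split_ifs at h <;>
      simp only [Sum.inl.injEq, Sum.inr.injEq, Fin.mk.injEq, reduceCtorEq] at h <;> omega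

lemma chi_adj {k : ℕ} (hk : 1 ≤ k) (a b : Option (Fin 3 × Fin k))
    (ha : a ≠ some (2, ⟨0, hk⟩)) (hb : b ≠ some (2, ⟨0, hk⟩)) :
    (disjSum (pathGraph (2*k+1)) (pathGraph (k-1))).Adj (chi k a) (chi k b) ↔
      (subClaw k).Adj a b := by
  rcases a with _ | ⟨i, j⟩ <;> rcases b with _ | ⟨i', j'⟩
  · simp [chi, disjSum_adj_ll, pathGraph_adj]
  · simp only [chi, ne_eq, Option.some.injEq, Prod.ext_iff, Fin.ext_iff, not_and] at *
    split_ifs <;>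
      simp_all [disjSum_adj_ll, disjSum_adj_lr, pathGraph_adj, subClaw_adj_ns, -Fin.val_eq_zero_iff, Fin.ext_iff] <;>
      omega
  · simp only [chi, ne_eq, Option.some.injEq, Prod.ext_iff, Fin.ext_iff, not_and] at *
    split_ifs <;>
      simp_all [disjSum_adj_ll, disjSum_adj_rl, pathGraph_adj, subClaw_adj_sn, -Fin.val_eq_zero_iff, Fin.ext_iff] <;>
      omega
  · have hj := j.isLt; have hj' := j'.isLt
    simp only [chi, ne_eq, Option.some.injEq, Prod.ext_iff, Fin.ext_iff, not_and] at *
    split_ifs <;>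
      simp_all [disjSum_adj_ll, disjSum_adj_rr, disjSum_adj_lr, disjSum_adj_rl, pathGraph_adj,
        subClaw_adj_ss, -Fin.val_eq_zero_iff, Fin.ext_iff] <;>
      omega

/-- Embedding of `3P_k` into `S_k`. -/
def e1 (k : ℕ) : threePath k ↪g subClaw k where
  toFun := some
  inj' := Option.some_injective _
  map_rel_iff' := by
    intro p q
    show (subClaw k).Adj (some p) (some q) ↔ _
    rw [subClaw_adj_ss, threePath_adj]

/-- Embedding of `3P_k` into `T_k`. -/
def e2 (k : ℕ) : threePath k ↪g subNet k where
  toFun := fun p => (p.1, ⟨(p.2 : ℕ) + 1, by have := p.2.isLt; omega⟩)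
  inj' := by
    rintro ⟨i, j⟩ ⟨i', j'⟩ h
    simp only [Prod.ext_iff, Fin.ext_iff] at *
    omega
  map_rel_iff' := by
    intro p q
    show (subNet k).Adj (p.1, ⟨(p.2 : ℕ) + 1, _⟩) (q.1, ⟨(q.2 : ℕ) + 1, _⟩) ↔ _
    rw [subNet_adj, threePath_adj]
    simp <;> omega

def psi (k : ℕ) : Fin (2*k+1) ⊕ Fin (k-1) → Option (Fin 3 × Fin k)
  | Sum.inl m =>
    if h : (m : ℕ) < k then some (0, ⟨k - 1 - m, by omega⟩)
    else if h2 : (m : ℕ) = k then none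
    else some (1, ⟨(m : ℕ) - k - 1, by have := m.isLt; omega⟩)
  | Sum.inr m => some (2, ⟨(m : ℕ) + 1, by have := m.isLt; omega⟩)

/-- Embedding of `P_{2k+1} + P_{k-1}` into `S_k`. -/
def e3 (k : ℕ) : disjSum (pathGraph (2*k+1)) (pathGraph (k-1)) ↪g subClaw k where
  toFun := psi k
  inj' := by
    rintro (m | m) (m' | m') h <;>
      have := m.isLt <;> have := m'.isLt <;>
      simp only [psi] at h <;> (try split_ifs at h) <;>
      simp only [Option.some.injEq, Prod.ext_iff, Fin.ext_iff, Fin.mk.injEq, reduceCtorEq,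
        Sum.inl.injEq, Sum.inr.injEq] at * <;>
      omega
  map_rel_iff' := by
    intro a b; show (subClaw k).Adj (psi k a) (psi k b) ↔ _; revert a b
    rintro (m | m) (m' | m') <;> have := m.isLt <;> have := m'.isLt <;>
        simp only [psi]
    · split_ifs <;>
        simp [subClaw_adj_ss, subClaw_adj_ns, subClaw_adj_sn, disjSum_adj_ll, pathGraph_adj,
          Fin.ext_iff, (subClaw k).irrefl] <;>
        omega
    · split_ifs <;>
        simp [subClaw_adj_ss, subClaw_adj_ns, subClaw_adj_sn, disjSum_adj_lr, pathGraph_adj,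
          Fin.ext_iff] <;>
        omega
    · split_ifs <;>
        simp [subClaw_adj_ss, subClaw_adj_ns, subClaw_adj_sn, disjSum_adj_rl, pathGraph_adj,
          Fin.ext_iff] <;>
        omega
    · simp [subClaw_adj_ss, disjSum_adj_rr, pathGraph_adj, Fin.ext_iff]
      omega

def psiN (k : ℕ) : Fin (2*k+1) ⊕ Fin (k-1) → Fin 3 × Fin (k+1)
  | Sum.inl m =>
    if h : (m : ℕ) ≤ k then (0, ⟨k - m, by omega⟩)
    else (1, ⟨(m : ℕ) - k - 1, by have := m.isLt; omega⟩)
  | Sum.inr m => (2, ⟨(m : ℕ) + 1, by have := m.isLt; omega⟩)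

/-- Embedding of `P_{2k+1} + P_{k-1}` into `T_k`. -/
def e4 (k : ℕ) : disjSum (pathGraph (2*k+1)) (pathGraph (k-1)) ↪g subNet k where
  toFun := psiN k
  inj' := by
    rintro (m | m) (m' | m') h <;>
      have := m.isLt <;> have := m'.isLt <;>
      simp only [psiN] at h <;> (try split_ifs at h) <;>
      simp only [Prod.ext_iff, Fin.ext_iff, Fin.mk.injEq, reduceCtorEq,
        Sum.inl.injEq, Sum.inr.injEq] at * <;>
      omega
  map_rel_iff' := by
    intro a b; show (subNet k).Adj (psiN k a) (psiN k b) ↔ _; revert a b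
    rintro (m | m) (m' | m') <;> have := m.isLt <;> have := m'.isLt <;>
        simp only [psiN]
    · split_ifs <;>
        simp [subNet_adj, disjSum_adj_ll, pathGraph_adj, Fin.ext_iff] <;>
        omega
    · split_ifs <;>
        simp [subNet_adj, disjSum_adj_lr, pathGraph_adj, Fin.ext_iff] <;>
        omega
    · split_ifs <;>
        simp [subNet_adj, disjSum_adj_rl, pathGraph_adj, Fin.ext_iff] <;>
        omega
    · simp [subNet_adj, disjSum_adj_rr, pathGraph_adj, Fin.ext_iff]
      omega

set_option maxHeartbeats 2000000 in
/-- `T_k` has no vertex with three pairwise nonadjacent distinct neighbours. -/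
lemma subNet_no_claw {k : ℕ} (v a b c : Fin 3 × Fin (k+1))
    (hva : (subNet k).Adj v a) (hvb : (subNet k).Adj v b) (hvc : (subNet k).Adj v c)
    (hab : ¬ (subNet k).Adj a b) (hac : ¬ (subNet k).Adj a c) (hbc : ¬ (subNet k).Adj b c)
    (hab' : a ≠ b) (hac' : a ≠ c) (hbc' : b ≠ c) : False := by
  obtain ⟨⟨vi, hvi⟩, ⟨vj, hvj⟩⟩ := v
  obtain ⟨⟨ai, hai⟩, ⟨aj, haj⟩⟩ := a
  obtain ⟨⟨bi, hbi⟩, ⟨bj, hbj⟩⟩ := b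
  obtain ⟨⟨ci, hci⟩, ⟨cj, hcj⟩⟩ := c
  simp only [subNet_adj, Prod.ext_iff, Fin.ext_iff, ne_eq, not_and, not_or] at hva hvb hvc hab hac hbc hab' hac' hbc'
  rcases hva with ⟨h1, h2, h3⟩ | ⟨h1, h2⟩ <;>
    rcases hvb with ⟨h4, h5, h6⟩ | ⟨h4, h5⟩ <;>
      rcases hvc with ⟨h7, h8, h9⟩ | ⟨h7, h8⟩ <;> omega

/-- Automorphism of `S_k` permuting the arms. -/
def clawPerm (k : ℕ) (σ : Equiv.Perm (Fin 3)) : subClaw k ≃g subClaw k where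
  toEquiv := Equiv.optionCongr (σ.prodCongr (Equiv.refl (Fin k)))
  map_rel_iff' := by
    rintro (_ | ⟨i, j⟩) (_ | ⟨i', j'⟩)
    · simp [(subClaw k).irrefl]
    · simp [subClaw_adj_ns]
    · simp [subClaw_adj_sn]
    · simp [subClaw_adj_ss, Fin.val_eq_val, σ.injective.eq_iff, Prod.map]

/-- If `none` is missing from the range, embed into `3P_k`. -/
def toThree {W : Type} {k : ℕ} (hk : 1 ≤ k) {H : SimpleGraph W} (f : H ↪g subClaw k)
    (h : ∀ w, f w ≠ none) : H ↪g threePath k where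
  toFun := fun w => (f w).getD (0, ⟨0, hk⟩)
  inj' := by
    intro w w' hww
    apply f.injective
    rcases hw : f w with _ | p
    · exact absurd hw (h w)
    rcases hw' : f w' with _ | p'
    · exact absurd hw' (h w')
    simp only [hw, hw', Option.getD_some] at hww
    rw [hww]
  map_rel_iff' := by
    intro w w'
    show (threePath k).Adj ((f w).getD _) ((f w').getD _) ↔ _
    rcases hw : f w with _ | p
    · exact absurd hw (h w)
    rcases hw' : f w' with _ | p'
    · exact absurd hw' (h w')
    have := f.map_rel_iff (a := w) (b := w')
    rw [hw, hw'] at this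
    rw [← this, subClaw_adj_ss]
    simp only [Function.Embedding.coeFn_mk, hw, hw', Option.getD_some, threePath_adj]

/-- If `some (2,0)` is missing from the range, embed into `P_{2k+1} + P_{k-1}`. -/
def toDisj {W : Type} {k : ℕ} (hk : 1 ≤ k) {H : SimpleGraph W} (f : H ↪g subClaw k)
    (h : ∀ w, f w ≠ some (2, ⟨0, hk⟩)) :
    H ↪g disjSum (pathGraph (2*k+1)) (pathGraph (k-1)) where
  toFun := fun w => chi k (f w)
  inj' := fun w w' hww => f.injective (chi_inj hk _ _ (h w) (h w') hww)
  map_rel_iff' := by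
    intro w w'
    show (disjSum _ _).Adj (chi k (f w)) (chi k (f w')) ↔ _
    rw [chi_adj hk _ _ (h w) (h w'), f.map_rel_iff]

/-- `H` is an induced subgraph of both `S_k` and `T_k` iff `H` is an induced subgraph
of `3P_k` or of `P_{2k+1} + P_{k-1}`. -/
theorem stmt4 {W : Type} (k : ℕ) (hk : 1 ≤ k) (H : SimpleGraph W) :
    (IsInducedSubgraph H (subClaw k) ∧ IsInducedSubgraph H (subNet k)) ↔
      (IsInducedSubgraph H (threePath k) ∨
        IsInducedSubgraph H (disjSum (pathGraph (2 * k + 1)) (pathGraph (k - 1)))) := by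
  constructor
  · rintro ⟨⟨f⟩, ⟨g⟩⟩
    by_cases hnone : ∀ w, f w ≠ none
    · exact Or.inl ⟨toThree hk f hnone⟩
    push_neg at hnone
    obtain ⟨w0, hw0⟩ := hnone
    by_cases harm : ∃ i : Fin 3, ∀ w, f w ≠ some (i, ⟨0, hk⟩)
    · obtain ⟨i, hi⟩ := harm
      set σ := Equiv.swap i (2 : Fin 3) with hσ
      refine Or.inr ⟨toDisj hk ((clawPerm k σ).toEmbedding.comp f) ?_⟩
      intro w hw
      rcases hfw : f w with _ | ⟨i', j'⟩
      · have : (clawPerm k σ).toEmbedding.comp f w = none := by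
          simp [clawPerm, hfw, Equiv.optionCongr]
        rw [this] at hw
        cases hw
      · have hcomp : (clawPerm k σ).toEmbedding.comp f w = some (σ i', j') := by
          simp [clawPerm, hfw, Equiv.optionCongr]
        simp only [hcomp, Option.some.injEq, Prod.ext_iff] at hw
        have hii : i' = i := σ.injective (hw.1.trans (Equiv.swap_apply_left i 2).symm)
        apply hi w
        rw [hfw, hii, hw.2]
    · push_neg at harm
      exfalso
      obtain ⟨w1, hw1⟩ := harm 0
      obtain ⟨w2, hw2⟩ := harm 1
      obtain ⟨w3, hw3⟩ := harm 2
      have adj01 : H.Adj w0 w1 := by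
        rw [← f.map_rel_iff, hw0, hw1]; exact (subClaw_adj_ns _).mpr rfl
      have adj02 : H.Adj w0 w2 := by
        rw [← f.map_rel_iff, hw0, hw2]; exact (subClaw_adj_ns _).mpr rfl
      have adj03 : H.Adj w0 w3 := by
        rw [← f.map_rel_iff, hw0, hw3]; exact (subClaw_adj_ns _).mpr rfl
      have nadj12 : ¬ H.Adj w1 w2 := by
        rw [← f.map_rel_iff, hw1, hw2, subClaw_adj_ss]; simp
      have nadj13 : ¬ H.Adj w1 w3 := by
        rw [← f.map_rel_iff, hw1, hw3, subClaw_adj_ss]; simp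
      have nadj23 : ¬ H.Adj w2 w3 := by
        rw [← f.map_rel_iff, hw2, hw3, subClaw_adj_ss]; simp
      have ne12 : w1 ≠ w2 := fun e => by rw [e, hw2] at hw1; simp [Prod.ext_iff] at hw1
      have ne13 : w1 ≠ w3 := fun e => by rw [e, hw3] at hw1; simp [Prod.ext_iff] at hw1
      have ne23 : w2 ≠ w3 := fun e => by rw [e, hw3] at hw2; simp [Prod.ext_iff] at hw2
      exact subNet_no_claw (g w0) (g w1) (g w2) (g w3)
        (g.map_rel_iff.mpr adj01) (g.map_rel_iff.mpr adj02) (g.map_rel_iff.mpr adj03)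
        (fun h => nadj12 (g.map_rel_iff.mp h)) (fun h => nadj13 (g.map_rel_iff.mp h))
        (fun h => nadj23 (g.map_rel_iff.mp h))
        (g.injective.ne ne12) (g.injective.ne ne13) (g.injective.ne ne23)
  · rintro (he | he) <;> obtain ⟨e⟩ := he
    · exact ⟨⟨(e1 k).comp e⟩, ⟨(e2 k).comp e⟩⟩
    · exact ⟨⟨(e3 k).comp e⟩, ⟨(e4 k).comp e⟩⟩
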